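/- For the Jacobi–Anger expansion: for all real λ, t and θ, e^{−iλt cos θ} = J_0(−λt) + 2 Σ_{n=1}^∞ iⁿ J_n(−λt) cos(nθ), where J_n is the Bessel function of the first kind, and the series converges absolutely. -/

import Mathlib

/-- The Bessel function of the first kind of integer order `n`:
`J_n(z) = Σ_{m} (−1)^m / (m! (m+n)!) (z/2)^{2m+n}`. -/
noncomputable def besselJ (n : ℕ) (z : ℝ) : ℝ :=
  ∑' m : ℕ, ((-1 : ℝ) ^ m / (m.factorial * (m + n).factorial)) *
    (z / 2) ^ (2 * m + n)

lemma besselJ_norm_term (n m : ℕ) (x : ℝ) :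
    ‖((-1 : ℝ) ^ m / (m.factorial * (m + n).factorial)) * (x / 2) ^ (2 * m + n)‖
      = (|x| / 2) ^ (2 * m + n) / (m.factorial * (m + n).factorial) := by
  rw [Real.norm_eq_abs, abs_mul, abs_div, abs_pow, abs_pow, abs_neg, abs_one, one_pow,
    abs_div, abs_two]
  rw [abs_of_nonneg (by positivity : (0:ℝ) ≤ (m.factorial : ℝ) * (m + n).factorial)]
  ring

lemma besselJ_summable (n : ℕ) (x : ℝ) :
    Summable (fun m : ℕ => ((-1 : ℝ) ^ m / (m.factorial * (m + n).factorial)) *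
      (x / 2) ^ (2 * m + n)) := by
  apply Summable.of_norm_bounded
    (g := fun m : ℕ => (|x| / 2) ^ n * (((|x| / 2) ^ 2) ^ m / m.factorial))
    ((Real.summable_pow_div_factorial ((|x| / 2) ^ 2)).mul_left _)
  intro m
  rw [besselJ_norm_term]
  have h1 : (|x| / 2) ^ (2 * m + n) = (|x| / 2) ^ n * ((|x| / 2) ^ 2) ^ m := by
    rw [← pow_mul, ← pow_add]; ring_nf
  have h2 : (1:ℝ) ≤ ((m + n).factorial : ℝ) := by exact_mod_cast (m+n).factorial_pos
  have h3 : (0:ℝ) < (m.factorial : ℝ) := by exact_mod_cast m.factorial_pos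
  have h4 : (|x| / 2) ^ n * (((|x| / 2) ^ 2) ^ m / m.factorial)
      = ((|x| / 2) ^ n * ((|x| / 2) ^ 2) ^ m) / m.factorial := by ring
  rw [h1, h4]
  gcongr
  exact le_mul_of_one_le_right h3.le h2

lemma besselJ_hasSum (n : ℕ) (x : ℝ) :
    HasSum (fun m : ℕ => ((-1 : ℝ) ^ m / (m.factorial * (m + n).factorial)) *
      (x / 2) ^ (2 * m + n)) (besselJ n x) :=
  (besselJ_summable n x).hasSum

lemma besselJ_abs_le (n : ℕ) (x : ℝ) :
    |besselJ n x| ≤ (|x| / 2) ^ n / n.factorial * Real.exp ((|x| / 2) ^ 2) := by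
  have hnorm : Summable (fun m : ℕ =>
      ‖((-1 : ℝ) ^ m / (m.factorial * (m + n).factorial)) * (x / 2) ^ (2 * m + n)‖) :=
    (besselJ_summable n x).abs
  have hmaj : HasSum (fun m : ℕ => (|x| / 2) ^ n / n.factorial *
      (((|x| / 2) ^ 2) ^ m / m.factorial))
      ((|x| / 2) ^ n / n.factorial * Real.exp ((|x| / 2) ^ 2)) := by
    have h := NormedSpace.expSeries_div_hasSum_exp ((|x| / 2) ^ 2)
    rw [← Real.exp_eq_exp_ℝ] at h
    exact h.mul_left _
  calc |besselJ n x| ≤ ∑' m : ℕ,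
        ‖((-1 : ℝ) ^ m / (m.factorial * (m + n).factorial)) * (x / 2) ^ (2 * m + n)‖ :=
      norm_tsum_le_tsum_norm hnorm
    _ ≤ ∑' m : ℕ, (|x| / 2) ^ n / n.factorial * (((|x| / 2) ^ 2) ^ m / m.factorial) := by
      apply Summable.tsum_le_tsum _ hnorm hmaj.summable
      intro m
      rw [besselJ_norm_term]
      have h1 : (|x| / 2) ^ (2 * m + n) = (|x| / 2) ^ n * ((|x| / 2) ^ 2) ^ m := by
        rw [← pow_mul, ← pow_add]; ring_nf
      have h4 : (|x| / 2) ^ n / n.factorial * (((|x| / 2) ^ 2) ^ m / m.factorial)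
          = ((|x| / 2) ^ n * ((|x| / 2) ^ 2) ^ m) / (n.factorial * m.factorial) := by ring
      rw [h1, h4]
      apply div_le_div_of_nonneg_left (by positivity) (by positivity)
      have : n.factorial * m.factorial ≤ m.factorial * (m + n).factorial := by
        rw [Nat.mul_comm]
        exact Nat.mul_le_mul_left m.factorial (Nat.factorial_le (Nat.le_add_left n m))
      exact_mod_cast this
    _ = (|x| / 2) ^ n / n.factorial * Real.exp ((|x| / 2) ^ 2) := hmaj.tsum_eq

/-- The bijection `(n, m) ↦ (m + n⁺, m + n⁻)` between `ℤ × ℕ` and `ℕ × ℕ`. -/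
def jaEquiv : ℤ × ℕ ≃ ℕ × ℕ where
  toFun p := (p.2 + p.1.toNat, p.2 + (-p.1).toNat)
  invFun p := ((p.1 : ℤ) - (p.2 : ℤ), min p.1 p.2)
  left_inv p := by
    obtain ⟨n, m⟩ := p
    simp only [Prod.mk.injEq]
    constructor <;> omega
  right_inv p := by
    obtain ⟨a, b⟩ := p
    simp only [Prod.mk.injEq]
    constructor <;> omega

set_option maxHeartbeats 2000000 in
lemma jacobi_anger_int (x θ : ℝ) :
    HasSum (fun n : ℤ => Complex.I ^ n.natAbs * Complex.exp (θ * Complex.I) ^ n *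
      ((besselJ n.natAbs x : ℝ) : ℂ))
      (Complex.exp (Complex.I * x * Real.cos θ)) := by
  set w : ℂ := Complex.exp (θ * Complex.I) with hwdef
  have hw : w ≠ 0 := Complex.exp_ne_zero _
  set u : ℂ := Complex.I * x / 2 * w with hudef
  set v : ℂ := Complex.I * x / 2 * w⁻¹ with hvdef
  have hu : HasSum (fun p : ℕ => u ^ p / p.factorial) (Complex.exp u) := by
    rw [Complex.exp_eq_exp_ℂ]; exact NormedSpace.expSeries_div_hasSum_exp u
  have hv : HasSum (fun q : ℕ => v ^ q / q.factorial) (Complex.exp v) := by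
    rw [Complex.exp_eq_exp_ℂ]; exact NormedSpace.expSeries_div_hasSum_exp v
  have hnu : Summable (fun p : ℕ => ‖u ^ p / (p.factorial : ℂ)‖) :=
    (Real.summable_pow_div_factorial ‖u‖).congr fun p => by
      rw [norm_div, norm_pow, Complex.norm_natCast]
  have hnv : Summable (fun q : ℕ => ‖v ^ q / (q.factorial : ℂ)‖) :=
    (Real.summable_pow_div_factorial ‖v‖).congr fun q => by
      rw [norm_div, norm_pow, Complex.norm_natCast]
  have hs := summable_mul_of_summable_norm (R := ℂ) hnu hnv
  have hsum2 := hu.mul hv hs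
  have hsum3 : HasSum (fun pq : ℕ × ℕ =>
      (u ^ pq.1 / pq.1.factorial) * (v ^ pq.2 / pq.2.factorial))
      (Complex.exp u * Complex.exp v) := hsum2
  have hexp : Complex.exp u * Complex.exp v = Complex.exp (Complex.I * x * Real.cos θ) := by
    rw [← Complex.exp_add]
    congr 1
    have h2c := Complex.two_cos (θ : ℂ)
    rw [neg_mul] at h2c
    rw [Complex.ofReal_cos, hudef, hvdef, hwdef, ← Complex.exp_neg]
    linear_combination (-(Complex.I * (x : ℂ)) / 2) * h2c
  rw [hexp] at hsum3
  have key := jaEquiv.hasSum_iff.mpr hsum3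
  have key2 : HasSum (fun nm : ℤ × ℕ =>
      (u ^ (nm.2 + nm.1.toNat) / (nm.2 + nm.1.toNat).factorial) *
        (v ^ (nm.2 + (-nm.1).toNat) / (nm.2 + (-nm.1).toNat).factorial))
      (Complex.exp (Complex.I * x * Real.cos θ)) := key
  refine HasSum.prod_fiberwise key2 fun n => ?_
  have hb := besselJ_hasSum n.natAbs x
  have hbc : HasSum (fun m : ℕ =>
      ((((-1 : ℝ) ^ m / (m.factorial * (m + n.natAbs).factorial)) *
        (x / 2) ^ (2 * m + n.natAbs) : ℝ) : ℂ)) ((besselJ n.natAbs x : ℝ) : ℂ) :=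
    Complex.hasSum_ofReal.mpr hb
  have hc := hbc.mul_left (Complex.I ^ n.natAbs * w ^ n)
  have hfun : (fun m : ℕ =>
      (u ^ (m + n.toNat) / ((m + n.toNat).factorial : ℂ)) *
        (v ^ (m + (-n).toNat) / ((m + (-n).toNat).factorial : ℂ)))
      = fun m : ℕ => Complex.I ^ n.natAbs * w ^ n *
        ((((-1 : ℝ) ^ m / (m.factorial * (m + n.natAbs).factorial)) *
          (x / 2) ^ (2 * m + n.natAbs) : ℝ) : ℂ) := by
    funext m
    obtain ⟨k, rfl | rfl⟩ := n.eq_nat_or_neg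
    · have e1 : ((k : ℤ)).toNat = k := by omega
      have e2 : (-(k : ℤ)).toNat = 0 := by omega
      have e3 : ((k : ℤ)).natAbs = k := by omega
      rw [e1, e2, e3, add_zero, zpow_natCast, hudef, hvdef]
      push_cast
      have hI2 : (Complex.I) ^ (2 * m) = (-1 : ℂ) ^ m := by
        rw [pow_mul, Complex.I_sq]
      have hf1 : ((m + k).factorial : ℂ) ≠ 0 := Nat.cast_ne_zero.mpr (Nat.factorial_ne_zero _)
      have hf2 : ((m).factorial : ℂ) ≠ 0 := Nat.cast_ne_zero.mpr (Nat.factorial_ne_zero _)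
      field_simp
      rw [← hI2]
      field_simp
      have hwm : w ^ m * w⁻¹ ^ m = 1 := by rw [← mul_pow, mul_inv_cancel₀ hw, one_pow]
      have hwk : w ^ k * w⁻¹ ^ k = 1 := by rw [← mul_pow, mul_inv_cancel₀ hw, one_pow]
      linear_combination (Complex.I ^ (2 * m) * Complex.I ^ k * (x : ℂ) ^ (2 * m) * (x : ℂ) ^ k * (1 / 2 : ℂ) ^ (2 * m) * (1 / 2 : ℂ) ^ k * w ^ k) * hwm
    · have e1 : ((-(k : ℤ))).toNat = 0 := by omega
      have e2 : (-(-(k : ℤ))).toNat = k := by omega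
      have e3 : (-(k : ℤ)).natAbs = k := by omega
      rw [e1, e2, e3, add_zero, zpow_neg, zpow_natCast, hudef, hvdef]
      push_cast
      have hI2 : (Complex.I) ^ (2 * m) = (-1 : ℂ) ^ m := by
        rw [pow_mul, Complex.I_sq]
      have hf1 : ((m + k).factorial : ℂ) ≠ 0 := Nat.cast_ne_zero.mpr (Nat.factorial_ne_zero _)
      have hf2 : ((m).factorial : ℂ) ≠ 0 := Nat.cast_ne_zero.mpr (Nat.factorial_ne_zero _)
      field_simp
      rw [← hI2]
      field_simp
      have hwm : w ^ m * w⁻¹ ^ m = 1 := by rw [← mul_pow, mul_inv_cancel₀ hw, one_pow]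
      have hwk : w ^ k * w⁻¹ ^ k = 1 := by rw [← mul_pow, mul_inv_cancel₀ hw, one_pow]
      linear_combination (Complex.I ^ (2 * m) * Complex.I ^ k * (x : ℂ) ^ (2 * m) * (x : ℂ) ^ k * (1 / 2 : ℂ) ^ (2 * m) * (1 / 2 : ℂ) ^ k * (w ^ k * w⁻¹ ^ k)) * hwm + (Complex.I ^ (2 * m) * Complex.I ^ k * (x : ℂ) ^ (2 * m) * (x : ℂ) ^ k * (1 / 2 : ℂ) ^ (2 * m) * (1 / 2 : ℂ) ^ k) * hwk
  rw [hfun]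
  exact hc


set_option maxHeartbeats 1000000 in
/-- The Jacobi–Anger expansion:
`e^{−iλt cos θ} = J_0(−λt) + 2 Σ_{n≥1} iⁿ J_n(−λt) cos(nθ)`, with the series
converging absolutely. -/
theorem jacobi_anger (l t θ : ℝ) :
    Summable (fun n : ℕ =>
      ‖(2 * Complex.I ^ (n + 1) * ((besselJ (n + 1) (-(l * t)) : ℝ) : ℂ) *
          ((Real.cos ((n + 1) * θ) : ℝ) : ℂ))‖) ∧
    HasSum (fun n : ℕ =>
        2 * Complex.I ^ (n + 1) * ((besselJ (n + 1) (-(l * t)) : ℝ) : ℂ) *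
          ((Real.cos ((n + 1) * θ) : ℝ) : ℂ))
      (Complex.exp (-(Complex.I * l * t * Real.cos θ))
        - ((besselJ 0 (-(l * t)) : ℝ) : ℂ)) := by
  set x : ℝ := -(l * t) with hx
  set A : ℤ → ℂ := fun n => Complex.I ^ n.natAbs * Complex.exp ((θ : ℂ) * Complex.I) ^ n *
    ((besselJ n.natAbs x : ℝ) : ℂ) with hAdef
  have hA : HasSum A (Complex.exp (Complex.I * x * Real.cos θ)) := jacobi_anger_int x θ
  have hpos : Summable (fun n : ℕ => A ((n + 1 : ℕ) : ℤ)) :=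
    hA.summable.comp_injective
      (fun a b h => by simpa using h : Function.Injective fun n : ℕ => ((n + 1 : ℕ) : ℤ))
  have hneg : Summable (fun n : ℕ => A (-((n : ℤ) + 1))) :=
    hA.summable.comp_injective
      (fun a b h => by simpa using h : Function.Injective fun n : ℕ => -((n : ℤ) + 1))
  have hP := hpos.hasSum
  have hN := hneg.hasSum
  have hNat : HasSum (fun n : ℕ => A ((n : ℤ)))
      ((∑' n : ℕ, A ((n + 1 : ℕ) : ℤ)) + A (0 : ℤ)) := by
    have h := (hasSum_nat_add_iff (f := fun n : ℕ => A ((n : ℤ))) 1).mp hP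
    simpa using h
  have hTotal := HasSum.of_nat_of_neg_add_one (f := A) hNat hN
  have hval := hTotal.unique hA
  -- pointwise identity
  have hpt : ∀ n : ℕ, A ((n + 1 : ℕ) : ℤ) + A (-((n : ℤ) + 1)) =
      2 * Complex.I ^ (n + 1) * ((besselJ (n + 1) x : ℝ) : ℂ) *
        ((Real.cos (((n : ℝ) + 1) * θ) : ℝ) : ℂ) := by
    intro n
    simp only [hAdef]
    have h1 : ((-((n : ℤ) + 1))).natAbs = n + 1 := by omega
    have h2 : (((n + 1 : ℕ) : ℤ)).natAbs = n + 1 := by omega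
    rw [h1, h2]
    have h3 : Complex.exp ((θ : ℂ) * Complex.I) ^ (((n + 1 : ℕ)) : ℤ)
        = Complex.exp (((n + 1 : ℕ) : ℂ) * ((θ : ℂ) * Complex.I)) := by
      rw [zpow_natCast, ← Complex.exp_nat_mul]
    have h4 : Complex.exp ((θ : ℂ) * Complex.I) ^ (-((n : ℤ) + 1))
        = Complex.exp (-(((n + 1 : ℕ) : ℂ) * ((θ : ℂ) * Complex.I))) := by
      rw [show -((n : ℤ) + 1) = -(((n + 1 : ℕ)) : ℤ) by push_cast; ring,
        zpow_neg, zpow_natCast, ← Complex.exp_nat_mul, ← Complex.exp_neg]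
    rw [h3, h4]
    have h2c := Complex.two_cos (((n + 1 : ℕ) : ℂ) * (θ : ℂ))
    have e1 : (((n + 1 : ℕ)) : ℂ) * (θ : ℂ) * Complex.I
        = ((n + 1 : ℕ) : ℂ) * ((θ : ℂ) * Complex.I) := by ring
    have e2 : -((((n + 1 : ℕ)) : ℂ) * (θ : ℂ)) * Complex.I
        = -(((n + 1 : ℕ) : ℂ) * ((θ : ℂ) * Complex.I)) := by ring
    rw [e1, e2] at h2c
    have hcos : ((Real.cos (((n : ℝ) + 1) * θ) : ℝ) : ℂ)
        = Complex.cos (((n + 1 : ℕ) : ℂ) * (θ : ℂ)) := by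
      rw [Complex.ofReal_cos]; norm_cast
    rw [hcos]
    linear_combination (-(Complex.I ^ (n + 1) * ((besselJ (n + 1) x : ℝ) : ℂ))) * h2c
  have hA0 : A (0 : ℤ) = ((besselJ 0 x : ℝ) : ℂ) := by
    simp [hAdef]
  constructor
  · -- absolute convergence
    have hmaj : Summable (fun n : ℕ =>
        2 * Real.exp ((|x| / 2) ^ 2) * ((|x| / 2) ^ (n + 1) / (n + 1).factorial)) := by
      have h := (Real.summable_pow_div_factorial (|x| / 2)).comp_injective
        (Nat.succ_injective)
      exact (h.mul_left _)
    apply Summable.of_nonneg_of_le (fun n => norm_nonneg _) _ hmaj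
    intro n
    have hJ := besselJ_abs_le (n + 1) x
    have hcos : |Real.cos (((n : ℝ) + 1) * θ)| ≤ 1 := Real.abs_cos_le_one _
    have hnorm : ‖(2 * Complex.I ^ (n + 1) * ((besselJ (n + 1) x : ℝ) : ℂ) *
        ((Real.cos (((n : ℝ) + 1) * θ) : ℝ) : ℂ))‖
        = 2 * |besselJ (n + 1) x| * |Real.cos (((n : ℝ) + 1) * θ)| := by
      simp only [norm_mul, norm_pow, Complex.norm_I, Complex.norm_real, Complex.norm_ofNat,
        one_pow, mul_one, Real.norm_eq_abs]
    rw [hnorm]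
    nlinarith [hJ, hcos, abs_nonneg (besselJ (n + 1) x),
      abs_nonneg (Real.cos (((n : ℝ) + 1) * θ)),
      mul_nonneg (abs_nonneg (besselJ (n + 1) x)) (sub_nonneg.mpr hcos),
      Real.exp_pos ((|x| / 2) ^ 2),
      div_nonneg (pow_nonneg (by positivity : (0:ℝ) ≤ |x| / 2) (n + 1))
        (by positivity : (0:ℝ) ≤ ((n + 1).factorial : ℝ))]
  · have hfinal := hP.add hN
    have hfun := funext hpt
    rw [hfun] at hfinal
    have hsum_eq : Complex.exp (-(Complex.I * l * t * Real.cos θ)) - ((besselJ 0 x : ℝ) : ℂ)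
        = (∑' n : ℕ, A ((n + 1 : ℕ) : ℤ)) + (∑' n : ℕ, A (-((n : ℤ) + 1))) := by
      have hS : Complex.exp (Complex.I * x * Real.cos θ)
          = Complex.exp (-(Complex.I * l * t * Real.cos θ)) := by
        congr 1
        rw [hx]; push_cast; ring
      rw [← hS, ← hval, hA0]; ring
    rw [hsum_eq]
    exact hfinal
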